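/- For every permutation σ ∈ S_n and every 0 ≤ i ≤ n, the word σ|{1,...,i} (the subword of letters ≤ i) is itself a permutation in S_i, and standardization satisfies st(σ|{1,...,i}) = σ|{1,...,i}; moreover the map σ ↦ (σ|{1,...,i}, st(σ|{i+1,...,n})) together with the shuffle of positions reconstructs σ, making δ(σ) = Σ_{0≤i≤n} σ|{1,...,i} ⊗ st(σ|{i+1,...,n}) a coassociative coproduct on ℤS. -/

import Mathlib

/-- Standardization (0-based): replace each letter by its rank among the letters of `w`. -/
def stW (w : List ℕ) : List ℕ := w.map (fun x => (w.filter (· < x)).length)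

/-- `w` is the one-line word of a permutation of `{0, …, n-1}` where `n = w.length`. -/
def IsPermWord (w : List ℕ) : Prop := w.Perm (List.range w.length)

/-- The inversion set of a word: pairs `(j, i)` with `j > i` and `j` to the left of `i`. -/
def invSet (w : List ℕ) : Set (ℕ × ℕ) :=
  {p | p.2 < p.1 ∧ ∃ k l : ℕ, k < l ∧ w[k]? = some p.1 ∧ w[l]? = some p.2}

/-- The right weak order: inclusion of inversion sets. -/
def weakLe (u v : List ℕ) : Prop := invSet u ⊆ invSet v

/-- Left shifted concatenation `v △ u`: the word `v̄ u`, `v̄` being `v` shifted by `|u|`. -/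
def triangle (v u : List ℕ) : List ℕ := v.map (· + u.length) ++ u

/-- Right shifted concatenation `u □ v`: the word `u v̄`, `v̄` being `v` shifted by `|u|`. -/
def squareC (u v : List ℕ) : List ℕ := u ++ v.map (· + u.length)

lemma nodup_of_isPermWord {w : List ℕ} (h : IsPermWord w) : w.Nodup :=
  h.nodup_iff.mpr (List.nodup_range)

/-- Standardizing a word with distinct letters yields a permutation word. -/
lemma isPermWord_stW {w : List ℕ} (h : w.Nodup) : IsPermWord (stW w) := by
  show (stW w).Perm (List.range (stW w).length)
  classical
  set f : ℕ → ℕ := fun x => (w.filter (· < x)).length with hf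
  have hcard : ∀ x, f x = (w.toFinset.filter (· < x)).card := by
    intro x
    rw [hf]
    simp only
    rw [← List.toFinset_card_of_nodup (h.filter _)]
    congr 1
    ext z
    simp [List.mem_filter]
  have hmono : ∀ x ∈ w, ∀ y ∈ w, x < y → f x < f y := by
    intro x hx y hy hxy
    rw [hcard, hcard]
    apply Finset.card_lt_card
    constructor
    · intro z hz
      simp only [Finset.mem_filter, decide_eq_true_eq] at hz ⊢
      exact ⟨hz.1, lt_trans hz.2 hxy⟩
    · intro hcon
      have hxmem : x ∈ w.toFinset.filter (· < y) := by
        simp only [Finset.mem_filter, decide_eq_true_eq]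
        exact ⟨List.mem_toFinset.2 hx, hxy⟩
      have := hcon hxmem
      simp only [Finset.mem_filter, decide_eq_true_eq] at this
      exact lt_irrefl x this.2
  have hinj : ∀ x ∈ w, ∀ y ∈ w, f x = f y → x = y := by
    intro x hx y hy hxy
    rcases lt_trichotomy x y with h1 | h1 | h1
    · exact absurd hxy (Nat.ne_of_lt (hmono x hx y hy h1))
    · exact h1
    · exact absurd hxy.symm (Nat.ne_of_lt (hmono y hy x hx h1))
  have hltn : ∀ x ∈ w, f x < w.length := by
    intro x hx
    rw [hf]
    simp only
    refine List.length_filter_lt_length_iff_exists.2 ⟨x, hx, by simp⟩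
  have hnodup : (stW w).Nodup := List.Nodup.map_on hinj h
  have hlen : (stW w).length = w.length := by simp [stW]
  rw [hlen]
  refine (List.perm_ext_iff_of_nodup hnodup (List.nodup_range)).2 ?_
  intro k
  simp only [List.mem_range]
  constructor
  · rintro hk
    simp only [stW, List.mem_map] at hk
    obtain ⟨x, hx, rfl⟩ := hk
    exact hltn x hx
  · intro hk
    -- surjectivity via cardinality
    have himage : w.toFinset.image f = Finset.range w.length := by
      apply Finset.eq_of_subset_of_card_le
      · intro m hm
        simp only [Finset.mem_image, List.mem_toFinset] at hm
        obtain ⟨x, hx, rfl⟩ := hm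
        exact Finset.mem_range.2 (hltn x hx)
      · rw [Finset.card_range, Finset.card_image_of_injOn ?_]
        · rw [List.toFinset_card_of_nodup h]
        · intro x hx y hy
          exact hinj x (List.mem_toFinset.1 hx) y (List.mem_toFinset.1 hy)
    have : k ∈ w.toFinset.image f := by rw [himage]; exact Finset.mem_range.2 hk
    simp only [Finset.mem_image, List.mem_toFinset] at this
    obtain ⟨x, hx, rfl⟩ := this
    simp only [stW, List.mem_map]
    exact ⟨x, hx, rfl⟩


lemma isPermWord_stW_filter {w : List ℕ} (h : IsPermWord w)
    (p : ℕ → Bool) : IsPermWord (stW (w.filter p)) :=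
  isPermWord_stW ((nodup_of_isPermWord h).filter _)

lemma isPermWord_filter_lt {w : List ℕ} (h : IsPermWord w) (i : ℕ) :
    IsPermWord (w.filter (· < i)) := by
  have h1 : (w.filter (· < i)).Perm ((List.range w.length).filter (· < i)) := h.filter _
  have h2 : ((List.range w.length).filter (· < i)).Perm (List.range (min i w.length)) := by
    refine (List.perm_ext_iff_of_nodup ((List.nodup_range).filter _) (List.nodup_range)).2 ?_
    intro x
    simp only [List.mem_filter, List.mem_range, decide_eq_true_eq, lt_min_iff]
    tauto
  have h3 := h1.trans h2
  have hl : (w.filter (· < i)).length = min i w.length := by simpa using h3.length_eq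
  unfold IsPermWord
  rw [hl]; exact h3

/-- The type of permutation words. -/
abbrev PW : Type := {w : List ℕ // IsPermWord w}

/-- `ℤS`: the free `ℤ`-module on the set of all permutations. -/
abbrev ZS : Type := PW →₀ ℤ

open scoped TensorProduct

/-- The coproduct on a basis permutation:
`δ(σ) = Σ_{0 ≤ i ≤ n} σ|{1,…,i} ⊗ st(σ|{i+1,…,n})`. -/
noncomputable def deltaWord (w : PW) : ZS ⊗[ℤ] ZS :=
  ∑ i ∈ Finset.range (w.1.length + 1),
    Finsupp.single (⟨w.1.filter (· < i), isPermWord_filter_lt w.2 i⟩ : PW) (1 : ℤ) ⊗ₜ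
      Finsupp.single
        (⟨stW (w.1.filter (fun x => i ≤ x)), isPermWord_stW_filter w.2 _⟩ : PW) (1 : ℤ)

/-- The coproduct `δ` of the Malvenuto–Reutenauer Hopf algebra `ℤS`
(standardized unshuffling), as a `ℤ`-linear map. -/
noncomputable def Delta : ZS →ₗ[ℤ] ZS ⊗[ℤ] ZS :=
  Finsupp.lsum ℤ (fun w => LinearMap.toSpanSingleton ℤ _ (deltaWord w))

/-- The finite set of all permutation words of `{0,…,n-1}`. -/
def permsOf (n : ℕ) : Finset (List ℕ) := (List.range n).permutations.toFinset

/-- `Shuffle u v w` : `w` is a shuffle of `u` and `v`. -/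
inductive Shuffle : List ℕ → List ℕ → List ℕ → Prop
  | nil : Shuffle [] [] []
  | left {u v w : List ℕ} (a : ℕ) : Shuffle u v w → Shuffle (a :: u) v (a :: w)
  | right {u v w : List ℕ} (a : ℕ) : Shuffle u v w → Shuffle u (a :: v) (a :: w)


lemma length_filter_lt_range (m k : ℕ) :
    ((List.range m).filter (fun t => t < k)).length = min k m := by
  induction m with
  | zero => simp
  | succ m ih =>
    rw [List.range_succ, List.filter_append, List.length_append, ih]
    by_cases h : m < k <;> simp [h] <;> omega

lemma perm_filter_lt {w : List ℕ} (h : IsPermWord w) {i : ℕ} (hi : i ≤ w.length) :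
    (w.filter (· < i)).Perm (List.range i) := by
  refine (h.filter _).trans ?_
  refine (List.perm_ext_iff_of_nodup ((List.nodup_range).filter _) (List.nodup_range)).2 ?_
  intro x
  simp only [List.mem_filter, List.mem_range, decide_eq_true_eq]
  omega

lemma perm_filter_ge {w : List ℕ} (h : IsPermWord w) (j : ℕ) :
    (w.filter (fun x => j ≤ x)).Perm ((List.range (w.length - j)).map (· + j)) := by
  refine (h.filter _).trans ?_
  refine (List.perm_ext_iff_of_nodup ((List.nodup_range).filter _)
    ((List.nodup_range).map fun a b hab => by omega)).2 ?_
  intro x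
  simp only [List.mem_filter, List.mem_range, List.mem_map, decide_eq_true_eq]
  constructor
  · rintro ⟨hx, hj⟩; exact ⟨x - j, by omega, by omega⟩
  · rintro ⟨t, ht, rfl⟩; omega

lemma stW_eq_map_sub {u : List ℕ} {m a : ℕ}
    (h : u.Perm ((List.range m).map (· + a))) :
    stW u = u.map (fun x => x - a) := by
  unfold stW
  refine List.map_congr_left fun x hx => ?_
  have h1 : (u.filter (· < x)).length
      = (((List.range m).map (· + a)).filter (· < x)).length :=
    (h.filter _).length_eq
  rw [h1, List.filter_map, List.length_map]
  have h2 : List.filter ((fun y => decide (y < x)) ∘ (· + a)) (List.range m)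
      = List.filter (fun t => t < x - a) (List.range m) := by
    refine List.filter_congr fun t _ => ?_
    simp only [Function.comp_apply, decide_eq_decide]
    omega
  rw [h2, length_filter_lt_range]
  have hx' : x ∈ (List.range m).map (· + a) := h.mem_iff.1 hx
  simp only [List.mem_map, List.mem_range] at hx'
  obtain ⟨t, ht, rfl⟩ := hx'
  omega

lemma shuffle_filter (p : ℕ → Bool) (w : List ℕ) :
    Shuffle (w.filter p) (w.filter (fun x => !p x)) w := by
  induction w with
  | nil => exact Shuffle.nil
  | cons a w ih =>
    by_cases hp : p a = true
    · rw [List.filter_cons_of_pos hp, List.filter_cons_of_neg (by simp [hp])]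
      exact Shuffle.left a ih
    · rw [List.filter_cons_of_neg (by simpa using hp), List.filter_cons_of_pos (by simp [hp])]
      exact Shuffle.right a ih

lemma shuffle_parts (w : List ℕ) (i : ℕ) :
    Shuffle (w.filter (· < i)) (w.filter (fun x => i ≤ x)) w := by
  have h := shuffle_filter (fun x => decide (x < i)) w
  have he : (fun x => !decide (x < i)) = (fun x : ℕ => decide (i ≤ x)) := by
    funext x
    rw [Bool.eq_iff_iff]
    simp only [Bool.not_eq_true', decide_eq_false_iff_not, decide_eq_true_eq]
    omega
  rwa [he] at h

lemma stW_filter_lt {w : List ℕ} (h : IsPermWord w) {i : ℕ} (hi : i ≤ w.length) :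
    stW (w.filter (· < i)) = w.filter (· < i) := by
  have hp : (w.filter (· < i)).Perm ((List.range i).map (· + 0)) := by
    simpa using perm_filter_lt h hi
  have := stW_eq_map_sub hp
  simpa using this

lemma length_filter_lt {w : List ℕ} (h : IsPermWord w) {i : ℕ} (hi : i ≤ w.length) :
    (w.filter (· < i)).length = i := by
  simpa using (perm_filter_lt h hi).length_eq

lemma length_filter_ge {w : List ℕ} (h : IsPermWord w) (j : ℕ) :
    (w.filter (fun x => j ≤ x)).length = w.length - j := by
  simpa using (perm_filter_ge h j).length_eq

lemma length_stW (w : List ℕ) : (stW w).length = w.length := by simp [stW]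

lemma filter_lt_filter_lt (w : List ℕ) {i j : ℕ} (hj : j ≤ i) :
    (w.filter (· < i)).filter (· < j) = w.filter (· < j) := by
  rw [List.filter_filter]
  refine List.filter_congr fun x _ => ?_
  by_cases h : x < j
  · simp [h, lt_of_lt_of_le h hj]
  · simp [h]

lemma perm_filter_band {w : List ℕ} (h : IsPermWord w) {i j : ℕ} (hj : j ≤ i)
    (hi : i ≤ w.length) :
    ((w.filter (· < i)).filter (fun x => j ≤ x)).Perm
      ((List.range (i - j)).map (· + j)) := by
  rw [List.filter_filter]
  refine (h.filter _).trans ?_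
  refine (List.perm_ext_iff_of_nodup ((List.nodup_range).filter _)
    ((List.nodup_range).map fun a b hab => by omega)).2 ?_
  intro x
  simp only [List.mem_filter, List.mem_range, List.mem_map, Bool.and_eq_true,
    decide_eq_true_eq]
  constructor
  · rintro ⟨hx, hxj, hxi⟩; exact ⟨x - j, by omega, by omega⟩
  · rintro ⟨t, ht, rfl⟩; omega

lemma middle_eq {w : List ℕ} (h : IsPermWord w) {i j : ℕ} (hj : j ≤ i)
    (hi : i ≤ w.length) :
    stW ((w.filter (· < i)).filter (fun x => j ≤ x)) =
      (stW (w.filter (fun x => j ≤ x))).filter (· < i - j) := by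
  rw [stW_eq_map_sub (perm_filter_band h hj hi),
      stW_eq_map_sub (perm_filter_ge h j), List.filter_map, List.filter_filter,
      List.filter_filter]
  congr 1
  refine List.filter_congr fun x _ => ?_
  rw [Bool.eq_iff_iff]
  simp only [Function.comp_apply, Bool.and_eq_true, decide_eq_true_eq]
  omega

lemma third_eq {w : List ℕ} (h : IsPermWord w) {i j : ℕ} (hj : j ≤ i)
    (hi : i ≤ w.length) :
    stW ((stW (w.filter (fun x => j ≤ x))).filter (fun x => i - j ≤ x)) =
      stW (w.filter (fun x => i ≤ x)) := by
  rw [stW_eq_map_sub (perm_filter_ge h j), List.filter_map]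
  have h1 : List.filter ((fun x => decide (i - j ≤ x)) ∘ fun x => x - j)
      (w.filter (fun x => j ≤ x)) = w.filter (fun x => i ≤ x) := by
    rw [List.filter_filter]
    refine List.filter_congr fun x _ => ?_
    rw [Bool.eq_iff_iff]
    simp only [Function.comp_apply, Bool.and_eq_true, decide_eq_true_eq]
    omega
  rw [h1]
  have hp : ((w.filter (fun x => i ≤ x)).map (fun x => x - j)).Perm
      ((List.range (w.length - i)).map (· + (i - j))) := by
    have hp0 := (perm_filter_ge h i).map (fun x => x - j)
    rw [List.map_map] at hp0
    have he : List.map ((fun x => x - j) ∘ (· + i)) (List.range (w.length - i))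
        = List.map (· + (i - j)) (List.range (w.length - i)) :=
      List.map_congr_left fun t _ => by simp only [Function.comp_apply]; omega
    rwa [he] at hp0
  rw [stW_eq_map_sub hp, stW_eq_map_sub (perm_filter_ge h i), List.map_map]
  refine List.map_congr_left fun x hx => ?_
  have hxm := List.of_mem_filter hx
  simp only [decide_eq_true_eq] at hxm
  simp only [Function.comp_apply]
  omega

lemma tmul3_congr {a b c d e f : PW} (h1 : a.1 = d.1) (h2 : b.1 = e.1) (h3 : c.1 = f.1) :
    (Finsupp.single a (1:ℤ)) ⊗ₜ[ℤ] ((Finsupp.single b (1:ℤ)) ⊗ₜ[ℤ] (Finsupp.single c (1:ℤ)))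
      = (Finsupp.single d (1:ℤ)) ⊗ₜ[ℤ] ((Finsupp.single e (1:ℤ)) ⊗ₜ[ℤ] (Finsupp.single f (1:ℤ))) := by
  rw [Subtype.ext h1, Subtype.ext h2, Subtype.ext h3]

lemma delta_single (τ : PW) : Delta (Finsupp.single τ 1) = deltaWord τ := by
  simp [Delta, Finsupp.lsum_single, LinearMap.toSpanSingleton_apply]

/-- For a permutation `σ ∈ S_n` and `0 ≤ i ≤ n`, the subword
`σ|{1,…,i}` of the `i` smallest letters is itself a permutation word in `S_i`
(so `st(σ|{1,…,i}) = σ|{1,…,i}`), and `σ` is reconstructed as a shuffle of its two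
subwords; moreover `δ(σ) = Σ_i σ|{1,…,i} ⊗ st(σ|{i+1,…,n})` is a coassociative
coproduct on `ℤS`. -/
theorem delta_coassociative :
    (∀ σ : PW, ∀ i : ℕ, i ≤ σ.1.length →
      (σ.1.filter (· < i)).Perm (List.range i) ∧
      stW (σ.1.filter (· < i)) = σ.1.filter (· < i) ∧
      Shuffle (σ.1.filter (· < i)) (σ.1.filter (fun x => i ≤ x)) σ.1) ∧
    (TensorProduct.assoc ℤ ZS ZS ZS).toLinearMap ∘ₗ
        (TensorProduct.map Delta LinearMap.id) ∘ₗ Delta =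
      (TensorProduct.map LinearMap.id Delta) ∘ₗ Delta := by
  constructor
  · intro σ i hi
    exact ⟨perm_filter_lt σ.2 hi, stW_filter_lt σ.2 hi, shuffle_parts σ.1 i⟩
  · set_option synthInstance.maxHeartbeats 1000000 in
    apply Finsupp.lhom_ext'
    intro σ
    apply LinearMap.ext_ring
    have hm : ∀ (a b : ZS), (TensorProduct.map Delta LinearMap.id) (a ⊗ₜ[ℤ] b) = Delta a ⊗ₜ[ℤ] b :=
      fun a b => TensorProduct.map_tmul _ _ _ _
    have hm2 : ∀ (a b : ZS), (TensorProduct.map LinearMap.id Delta) (a ⊗ₜ[ℤ] b) = a ⊗ₜ[ℤ] Delta b :=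
      fun a b => TensorProduct.map_tmul _ _ _ _
    have hd : ∀ τ : PW, Delta (Finsupp.single τ 1) = deltaWord τ := delta_single
    show (TensorProduct.assoc ℤ ZS ZS ZS) ((TensorProduct.map Delta LinearMap.id) (Delta (Finsupp.single σ 1))) = (TensorProduct.map LinearMap.id Delta) (Delta (Finsupp.single σ 1))
    simp only [LinearMap.coe_comp, Function.comp_apply, Finsupp.lsingle_apply,
      LinearEquiv.coe_coe, delta_single, deltaWord, map_sum, hm, hm2, hd,
      TensorProduct.map_tmul, LinearMap.id_coe, id_eq, delta_single,
      TensorProduct.sum_tmul, TensorProduct.tmul_sum, TensorProduct.assoc_tmul]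
    erw [map_sum]
    conv_lhs => arg 2; ext x; erw [map_sum]
    conv_lhs => arg 2; ext x; arg 2; ext y; erw [TensorProduct.assoc_tmul]
    rw [Finset.sum_sigma', Finset.sum_sigma']
    refine Finset.sum_nbij' (fun p => ⟨p.2, p.1 - p.2⟩) (fun p => ⟨p.1 + p.2, p.1⟩)
      ?_ ?_ ?_ ?_ ?_
    · rintro ⟨i, j⟩ hp
      simp only [Finset.mem_sigma, Finset.mem_range] at hp ⊢
      obtain ⟨hi, hj⟩ := hp
      rw [length_filter_lt σ.2 (by omega)] at hj
      rw [length_stW, length_filter_ge σ.2]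
      omega
    · rintro ⟨j, k⟩ hp
      simp only [Finset.mem_sigma, Finset.mem_range] at hp ⊢
      obtain ⟨hj, hk⟩ := hp
      rw [length_stW, length_filter_ge σ.2] at hk
      rw [length_filter_lt σ.2 (by omega)]
      omega
    · rintro ⟨i, j⟩ hp
      simp only [Finset.mem_sigma, Finset.mem_range] at hp
      obtain ⟨hi, hj⟩ := hp
      rw [length_filter_lt σ.2 (by omega)] at hj
      have h2 : j + (i - j) = i := by omega
      simp only [h2]
    · rintro ⟨j, k⟩ hp
      simp only [Nat.add_sub_cancel_left]
    · rintro ⟨i, j⟩ hp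
      simp only [Finset.mem_sigma, Finset.mem_range] at hp
      obtain ⟨hi, hj⟩ := hp
      rw [length_filter_lt σ.2 (by omega)] at hj
      have hji : j ≤ i := by omega
      have hin : i ≤ σ.1.length := by omega
      exact tmul3_congr (filter_lt_filter_lt σ.1 hji) (middle_eq σ.2 hji hin)
        (third_eq σ.2 hji hin).symm
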